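/- Suppose statement (2) of the removal-lemma formulation holds for all C ⊆ G (with parameters δ, ε). Then for every Γ ⊆ A × B with |Γ| ≥ (1-δ)N² and |A +_Γ B| ≤ KN, there exist A' ⊆ A and B' ⊆ B with |A'| ≥ (1-ε)N, |B'| ≥ (1-ε)N and |A' + B'| ≤ |A +_Γ B| + εN. -/

import Mathlib

open Finset Pointwise

theorem stmt_3 {G : Type*} [AddCommGroup G] [DecidableEq G]
    (A B : Finset G) (N : ℕ) (hA : A.card = N) (hB : B.card = N)
    (ε δ K : ℝ) (hε : 0 < ε) (hδ : 0 < δ) (hK : 1 ≤ K)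
    (h2 : ∀ C : Finset G,
      (((((A ×ˢ B) ×ˢ C).filter fun p => p.1.1 + p.1.2 = p.2).card : ℝ) ≤ δ * (N : ℝ) ^ 2) →
      ∃ A' ⊆ A, ∃ B' ⊆ B, ∃ C' ⊆ C,
        ((A \ A').card : ℝ) ≤ ε * N ∧ ((B \ B').card : ℝ) ≤ ε * N ∧
        ((C \ C').card : ℝ) ≤ ε * N ∧
        ∀ a ∈ A', ∀ b ∈ B', ∀ c ∈ C', a + b ≠ c)
    (Γ : Finset (G × G)) (hΓAB : Γ ⊆ A ×ˢ B)
    (hΓcard : (1 - δ) * (N : ℝ) ^ 2 ≤ Γ.card)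
    (hsum : ((Γ.image fun p => p.1 + p.2).card : ℝ) ≤ K * N) :
    ∃ A' ⊆ A, ∃ B' ⊆ B,
      (1 - ε) * N ≤ (A'.card : ℝ) ∧ (1 - ε) * N ≤ (B'.card : ℝ) ∧
      ((A' + B').card : ℝ) ≤ ((Γ.image fun p => p.1 + p.2).card : ℝ) + ε * N := by
  set S := Γ.image fun p => p.1 + p.2 with hS
  set C := (A + B) \ S with hCdef
  have hcount : ((((A ×ˢ B) ×ˢ C).filter fun p => p.1.1 + p.1.2 = p.2).card : ℝ)
      ≤ δ * (N : ℝ) ^ 2 := by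
    have hinj : (((A ×ˢ B) ×ˢ C).filter fun p => p.1.1 + p.1.2 = p.2).card
        ≤ ((A ×ˢ B) \ Γ).card := by
      apply Finset.card_le_card_of_injOn (fun p => p.1)
      · intro p hp
        simp only [mem_coe, mem_filter, mem_product, mem_sdiff, hCdef] at hp
        obtain ⟨⟨hab, hc, hcS⟩, heq⟩ := hp
        simp only [mem_coe, mem_sdiff, mem_product]
        refine ⟨hab, fun hpΓ => hcS ?_⟩
        rw [hS]
        rw [← heq]
        exact Finset.mem_image_of_mem _ hpΓ
      · intro p hp q hq h
        simp only [mem_coe, mem_filter] at hp hq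
        have h' : p.1 = q.1 := h
        have h2' : p.2 = q.2 := by rw [← hp.2, ← hq.2, h']
        exact Prod.ext h' h2'
    have hsd : (((A ×ˢ B) \ Γ).card : ℝ) = (N : ℝ) ^ 2 - Γ.card := by
      rw [Finset.card_sdiff_of_subset hΓAB, Nat.cast_sub (Finset.card_le_card hΓAB),
        Finset.card_product, hA, hB]
      push_cast
      ring
    have := (Nat.cast_le (α := ℝ)).mpr hinj
    nlinarith
  obtain ⟨A', hA'A, B', hB'B, C', hC'C, hAd, hBd, hCd, hfree⟩ := h2 C hcount
  refine ⟨A', hA'A, B', hB'B, ?_, ?_, ?_⟩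
  · have h3 : (A \ A').card + A'.card = N := by
      rw [Finset.card_sdiff_add_card_eq_card hA'A, hA]
    have h4 : ((A \ A').card : ℝ) + A'.card = N := by exact_mod_cast h3
    nlinarith
  · have h3 : (B \ B').card + B'.card = N := by
      rw [Finset.card_sdiff_add_card_eq_card hB'B, hB]
    have h4 : ((B \ B').card : ℝ) + B'.card = N := by exact_mod_cast h3
    nlinarith
  · have hsub : A' + B' ⊆ S ∪ (C \ C') := by
      intro x hx
      obtain ⟨a, ha, b, hb, rfl⟩ := Finset.mem_add.mp hx
      by_cases hxS : a + b ∈ S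
      · exact Finset.mem_union_left _ hxS
      · have hxC : a + b ∈ C := by
          rw [hCdef, Finset.mem_sdiff]
          exact ⟨Finset.add_mem_add (hA'A ha) (hB'B hb), hxS⟩
        have hxC' : a + b ∉ C' := fun hxC' => hfree a ha b hb _ hxC' rfl
        exact Finset.mem_union_right _ (Finset.mem_sdiff.mpr ⟨hxC, hxC'⟩)
    have h1 : (A' + B').card ≤ S.card + (C \ C').card :=
      le_trans (Finset.card_le_card hsub) (Finset.card_union_le _ _)
    have := (Nat.cast_le (α := ℝ)).mpr h1
    push_cast at this
    linarith
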